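/- For every n ≥ 0 the following identities hold: PPL_t(4n) = PPL_t(n); PPL_t(4n+1) = PPL_t(n) + 1; PPL_t(4n+2) = min(PPL_t(n), PPL_t(n+1)) + 2; PPL_t(4n+3) = PPL_t(n+1) + 1. -/

import Mathlib

/-- The Thue–Morse word: `tm n` is the number of ones (sum of binary digits)
in the binary expansion of `n`, taken mod 2. -/
def tm (n : ℕ) : ℕ := (Nat.digits 2 n).sum % 2

/-- `ps` is a factorization of the finite word `w` into nonempty palindromes. -/
def IsPalDecomp (w : List ℕ) (ps : List (List ℕ)) : Prop :=
  ps.flatten = w ∧ ∀ p ∈ ps, p ≠ [] ∧ p.Palindrome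

/-- The palindromic length of a finite word: the least number of nonempty
palindromes whose concatenation is the word (0 for the empty word). -/
noncomputable def palLen (w : List ℕ) : ℕ :=
  sInf {k | ∃ ps, ps.length = k ∧ IsPalDecomp w ps}

/-- `pplTM n` is the palindromic length of the prefix of length `n`
of the Thue–Morse word. -/
noncomputable def pplTM (n : ℕ) : ℕ := palLen ((List.range n).map tm)

namespace TMW

lemma tm_le (n : ℕ) : tm n ≤ 1 := by
  have : tm n < 2 := Nat.mod_lt _ (by norm_num)
  omega

lemma tm_two_mul (n : ℕ) : tm (2*n) = tm n := by
  rcases Nat.eq_zero_or_pos n with rfl | hn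
  · rfl
  · unfold tm
    rw [Nat.digits_def' (by norm_num : 1 < 2) (by omega : 0 < 2*n)]
    have h1 : 2*n % 2 = 0 := by omega
    have h2 : 2*n / 2 = n := by omega
    rw [h1, h2]
    simp

lemma tm_two_mul_add_one (n : ℕ) : tm (2*n+1) = (tm n + 1) % 2 := by
  unfold tm
  rw [Nat.digits_def' (by norm_num : 1 < 2) (by omega : 0 < 2*n+1)]
  have h1 : (2*n+1) % 2 = 1 := by omega
  have h2 : (2*n+1) / 2 = n := by omega
  rw [h1, h2]
  simp [List.sum_cons, Nat.add_mod, Nat.add_comm]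

lemma tm4_0 (n : ℕ) : tm (4*n) = tm n := by
  have : (4:ℕ)*n = 2*(2*n) := by ring
  rw [this, tm_two_mul, tm_two_mul]

lemma tm4_1 (n : ℕ) : tm (4*n+1) = (tm n + 1) % 2 := by
  have : (4:ℕ)*n+1 = 2*(2*n)+1 := by ring
  rw [this, tm_two_mul_add_one, tm_two_mul]

lemma tm4_2 (n : ℕ) : tm (4*n+2) = (tm n + 1) % 2 := by
  have : (4:ℕ)*n+2 = 2*(2*n+1) := by ring
  rw [this, tm_two_mul, tm_two_mul_add_one]

lemma tm4_3 (n : ℕ) : tm (4*n+3) = tm n := by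
  have : (4:ℕ)*n+3 = 2*(2*n+1)+1 := by ring
  rw [this, tm_two_mul_add_one, tm_two_mul_add_one]
  have := tm_le n
  omega

lemma tmA (n : ℕ) (h : tm n = tm (n+1)) : n % 2 = 1 := by
  by_contra hc
  obtain ⟨q, rfl⟩ : ∃ q, n = 2*q := ⟨n/2, by omega⟩
  rw [tm_two_mul, show 2*q+1 = 2*q+1 from rfl, tm_two_mul_add_one] at h
  have := tm_le q
  omega

lemma tmB (n : ℕ) (h : tm n = tm (n+2)) : 2 ≤ n % 4 := by
  by_contra hc
  have h4 : n % 4 = 0 ∨ n % 4 = 1 := by omega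
  rcases h4 with h4 | h4
  · obtain ⟨q, rfl⟩ : ∃ q, n = 4*q := ⟨n/4, by omega⟩
    rw [tm4_0, tm4_2] at h
    have := tm_le q
    omega
  · obtain ⟨q, rfl⟩ : ∃ q, n = 4*q+1 := ⟨n/4, by omega⟩
    rw [tm4_1, show 4*q+1+2 = 4*q+3 from rfl, tm4_3] at h
    have := tm_le q
    omega

lemma tmD (n : ℕ) (h1 : tm (n+1) = tm (n+3)) (h2 : tm n = tm (n+4)) : False := by
  have hx : ∀ q, tm q ≤ 1 := tm_le
  have h4 : n % 4 = 0 ∨ n % 4 = 1 ∨ n % 4 = 2 ∨ n % 4 = 3 := by omega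
  rcases h4 with h4 | h4 | h4 | h4
  · obtain ⟨q, rfl⟩ : ∃ q, n = 4*q := ⟨n/4, by omega⟩
    rw [tm4_1, show 4*q+3 = 4*q+3 from rfl, tm4_3] at h1
    have := hx q; omega
  · obtain ⟨q, rfl⟩ : ∃ q, n = 4*q+1 := ⟨n/4, by omega⟩
    rw [show 4*q+1+1 = 4*q+2 from rfl, tm4_2, show 4*q+1+3 = 4*(q+1) from by ring, tm4_0] at h1
    rw [tm4_1, show 4*q+1+4 = 4*(q+1)+1 from by ring, tm4_1] at h2
    have := hx q; have := hx (q+1); omega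
  · obtain ⟨q, rfl⟩ : ∃ q, n = 4*q+2 := ⟨n/4, by omega⟩
    rw [show 4*q+2+1 = 4*q+3 from rfl, tm4_3, show 4*q+2+3 = 4*(q+1)+1 from by ring, tm4_1] at h1
    rw [tm4_2, show 4*q+2+4 = 4*(q+1)+2 from by ring, tm4_2] at h2
    have := hx q; have := hx (q+1); omega
  · obtain ⟨q, rfl⟩ : ∃ q, n = 4*q+3 := ⟨n/4, by omega⟩
    rw [show 4*q+3+1 = 4*(q+1) from by ring, tm4_0, show 4*q+3+3 = 4*(q+1)+2 from by ring, tm4_2] at h1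
    have := hx (q+1); omega

/-- `Pal a b` : the factor `t[a..b)` of the Thue–Morse word is a palindrome. -/
def Pal (a b : ℕ) : Prop :=
  ∀ i j, a ≤ i → a ≤ j → i < b → j < b → i + j + 1 = a + b → tm i = tm j

lemma pal_single (a : ℕ) : Pal a (a+1) := by
  intro i j h1 h2 h3 h4 h5
  have : i = a ∧ j = a := by omega
  rw [this.1, this.2]

lemma pal_inner {a b : ℕ} (h : Pal a b) : Pal (a+1) (b-1) := by
  intro i j h1 h2 h3 h4 h5
  exact h i j (by omega) (by omega) (by omega) (by omega) (by omega)

/-- `Dec a b m` : `t[a..b)` is a concatenation of `m` nonempty palindromes. -/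
inductive Dec : ℕ → ℕ → ℕ → Prop
  | nil (a : ℕ) : Dec a a 0
  | cons {a c b m : ℕ} (hlt : a < c) (hp : Pal a c) (ht : Dec c b m) : Dec a b (m+1)

lemma dec_le {a b m : ℕ} (h : Dec a b m) : a ≤ b := by
  induction h with
  | nil => exact le_refl _
  | cons hlt hp ht ih => omega

lemma dec_cat {a b c j k : ℕ} (h1 : Dec a b j) (h2 : Dec b c k) : Dec a c (j+k) := by
  induction h1 with
  | nil => simpa using h2
  | cons hlt hp ht ih =>
    have := Dec.cons hlt hp (ih h2)
    convert this using 1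
    omega

lemma dec_one {a b : ℕ} (hlt : a < b) (h : Pal a b) : Dec a b 1 :=
  Dec.cons hlt h (Dec.nil b)

lemma dec_single (a : ℕ) : Dec a (a+1) 1 := dec_one (by omega) (pal_single a)

lemma dec_dropLast {a b : ℕ} (h : Pal a b) (hlt : a < b) :
    ∃ j, Dec a (b-1) j ∧ j ≤ 2 := by
  rcases (by omega : b = a + 1 ∨ b = a + 2 ∨ a + 3 ≤ b) with hb | hb | hb
  · exact ⟨0, by rw [show b - 1 = a by omega]; exact Dec.nil a, by omega⟩
  · refine ⟨1, ?_, by omega⟩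
    rw [show b - 1 = a + 1 by omega]
    exact dec_single a
  · refine ⟨2, ?_, le_refl _⟩
    have hinner : Dec (a+1) (b-1) 1 := dec_one (by omega) (pal_inner h)
    exact dec_cat (dec_single a) hinner

lemma dec_dropBoth {a b : ℕ} (h : Pal a b) (hab : a + 2 ≤ b) :
    ∃ j, Dec (a+1) (b-1) j ∧ j ≤ 1 := by
  rcases (by omega : b = a + 2 ∨ a + 3 ≤ b) with hb | hb
  · exact ⟨0, by rw [show b - 1 = a + 1 by omega]; exact Dec.nil _, by omega⟩
  · exact ⟨1, dec_one (by omega) (pal_inner h), le_refl _⟩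


lemma proj {a b : ℕ} (h : Pal a b) (i j : ℕ) (h1 : a ≤ 4*i+3) (h2 : a ≤ 4*j)
    (h3 : 4*i+3 < b) (h4 : 4*j < b) (h5 : 4*i+4*j+4 = a+b) : tm i = tm j := by
  have := h (4*i+3) (4*j) h1 h2 h3 h4 (by omega)
  rwa [tm4_3, tm4_0] at this

lemma palB0 {c d : ℕ} (h : Pal (4*c) (4*d)) : Pal c d := by
  intro i j hi hj hib hjb hsum
  exact proj h i j (by omega) (by omega) (by omega) (by omega) (by omega)

lemma palB1 {c d : ℕ} (h : Pal (4*c+1) (4*d+3)) : Pal c (d+1) := by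
  intro i j hi hj hib hjb hsum
  rcases eq_or_ne i j with rfl | hne
  · rfl
  by_cases hx : i < d ∧ c < j
  · exact proj h i j (by omega) (by omega) (by omega) (by omega) (by omega)
  · have hij : j = c ∧ i = d := by omega
    exact (proj h j i (by omega) (by omega) (by omega) (by omega) (by omega)).symm

lemma palB2 {c d : ℕ} (h : Pal (4*c+2) (4*d+2)) : Pal c (d+1) := by
  intro i j hi hj hib hjb hsum
  rcases eq_or_ne i j with rfl | hne
  · rfl
  by_cases hx : i < d ∧ c < j
  · exact proj h i j (by omega) (by omega) (by omega) (by omega) (by omega)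
  · have hij : j = c ∧ i = d := by omega
    exact (proj h j i (by omega) (by omega) (by omega) (by omega) (by omega)).symm

lemma palB3 {c d : ℕ} (h : Pal (4*c+3) (4*d+1)) : Pal c (d+1) := by
  intro i j hi hj hib hjb hsum
  rcases eq_or_ne i j with rfl | hne
  · rfl
  by_cases hx : i < d ∧ c < j
  · exact proj h i j (by omega) (by omega) (by omega) (by omega) (by omega)
  · have hij : j = c ∧ i = d := by omega
    exact (proj h j i (by omega) (by omega) (by omega) (by omega) (by omega)).symm

/-- Image of a block-level palindrome under the 4-block substitution. -/
lemma pal4 {x y : ℕ} (h : Pal x y) : Pal (4*x) (4*y) := by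
  intro i j hi hj hib hjb hsum
  have h4 : i % 4 = 0 ∨ i % 4 = 1 ∨ i % 4 = 2 ∨ i % 4 = 3 := by omega
  have hq : ∀ q q', x ≤ q → x ≤ q' → q < y → q' < y → q + q' + 1 = x + y → tm q = tm q' :=
    fun q q' a1 a2 a3 a4 a5 => h q q' a1 a2 a3 a4 a5
  rcases h4 with h4 | h4 | h4 | h4
  · obtain ⟨q, rfl⟩ : ∃ q, i = 4*q := ⟨i/4, by omega⟩
    obtain ⟨q', rfl⟩ : ∃ q', j = 4*q'+3 := ⟨j/4, by omega⟩
    rw [tm4_0, tm4_3]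
    exact hq q q' (by omega) (by omega) (by omega) (by omega) (by omega)
  · obtain ⟨q, rfl⟩ : ∃ q, i = 4*q+1 := ⟨i/4, by omega⟩
    obtain ⟨q', rfl⟩ : ∃ q', j = 4*q'+2 := ⟨j/4, by omega⟩
    rw [tm4_1, tm4_2]
    rw [hq q q' (by omega) (by omega) (by omega) (by omega) (by omega)]
  · obtain ⟨q, rfl⟩ : ∃ q, i = 4*q+2 := ⟨i/4, by omega⟩
    obtain ⟨q', rfl⟩ : ∃ q', j = 4*q'+1 := ⟨j/4, by omega⟩
    rw [tm4_2, tm4_1]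
    rw [hq q q' (by omega) (by omega) (by omega) (by omega) (by omega)]
  · obtain ⟨q, rfl⟩ : ∃ q, i = 4*q+3 := ⟨i/4, by omega⟩
    obtain ⟨q', rfl⟩ : ∃ q', j = 4*q' := ⟨j/4, by omega⟩
    rw [tm4_3, tm4_0]
    exact hq q q' (by omega) (by omega) (by omega) (by omega) (by omega)

/-- Classification of palindromic factors of the Thue–Morse word. -/
lemma palClass {a b : ℕ} (h : Pal a b) (hlt : a < b) :
    b = a + 1 ∨ (b = a + 3 ∧ 2 ≤ a % 4) ∨ ((a + b) % 4 = 0 ∧ (b - a) % 2 = 0) := by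
  by_cases hev : (b - a) % 2 = 0
  · right; right
    refine ⟨?_, hev⟩
    set l := (b - a) / 2 with hl
    have hc : tm (a + l - 1) = tm (a + l - 1 + 1) := by
      rw [show a + l - 1 + 1 = a + l by omega]
      apply h <;> omega
    have := tmA _ hc
    omega
  · -- odd length
    rcases (by omega : b = a + 1 ∨ b = a + 3 ∨ (a + 5 ≤ b ∧ (b - a) % 2 = 1)) with hb | hb | hb
    · exact Or.inl hb
    · refine Or.inr (Or.inl ⟨hb, ?_⟩)
      have hc : tm a = tm (a + 2) := by
        apply h <;> omega
      exact tmB _ hc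
    · exfalso
      set z := a + (b - a - 1) / 2 with hz
      have hc1 : tm (z - 1) = tm (z + 1) := by apply h <;> omega
      have hc2 : tm (z - 2) = tm (z + 2) := by apply h <;> omega
      refine tmD (z - 2) ?_ ?_
      · rw [show z - 2 + 1 = z - 1 by omega, show z - 2 + 3 = z + 1 by omega]
        exact hc1
      · rw [show z - 2 + 4 = z + 2 by omega]
        exact hc2


/-- `Claim p t m d s` : some `k`-piece palindromic decomposition of the
block-level factor `t[p..t)` exists with `k + d ≤ m + s`. -/
def Claim (p t m d s : ℕ) : Prop := ∃ k, Dec p t k ∧ k + d ≤ m + s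

lemma claim_cons {x y t j m d' s' d s : ℕ} (cov : Dec x y j) (h : Claim y t m d' s')
    (har : j + d + s' ≤ d' + s + 1) : Claim x t (m+1) d s := by
  obtain ⟨k, hk, hb⟩ := h
  exact ⟨j + k, dec_cat cov hk, by omega⟩

lemma claim_cons_or {x y t1 t2 j m d' s' d s : ℕ} (cov : Dec x y j)
    (h : Claim y t1 m d' s' ∨ Claim y t2 m d' s')
    (har : j + d + s' ≤ d' + s + 1) :
    Claim x t1 (m+1) d s ∨ Claim x t2 (m+1) d s :=
  h.imp (fun hh => claim_cons cov hh har) (fun hh => claim_cons cov hh har)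

/-- The simultaneous induction statement: lower bounds on the block-level
palindromic length extracted from any decomposition of `t[a..b)`. -/
structure Goals (a b m : ℕ) : Prop where
  g00 : ∀ c n, a = 4*c → b = 4*n → Claim c n m 0 0
  g10 : ∀ c n, a = 4*c+1 → b = 4*n → Claim c n m 1 0
  g20 : ∀ c n, a = 4*c+2 → b = 4*n → Claim c n m 1 0 ∧ Claim (c+1) n m 1 0
  g30 : ∀ c n, a = 4*c+3 → b = 4*n → Claim c n m 0 0 ∧ Claim (c+1) n m 1 0
  g01 : ∀ c n, a = 4*c → b = 4*n+1 → Claim c n m 1 0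
  g11 : ∀ c n, a = 4*c+1 → b = 4*n+1 → Claim c n m 0 0
  g21 : ∀ c n, a = 4*c+2 → b = 4*n+1 → Claim c n m 0 0 ∧ Claim (c+1) n m 0 0
  g31 : ∀ c n, a = 4*c+3 → b = 4*n+1 → Claim c n m 0 1 ∧ Claim (c+1) n m 0 0
  g02 : ∀ c n, a = 4*c → b = 4*n+2 → Claim c n m 2 0 ∨ Claim c (n+1) m 2 0
  g12 : ∀ c n, a = 4*c+1 → b = 4*n+2 → Claim c n m 1 0 ∨ Claim c (n+1) m 1 0
  g22 : ∀ c n, a = 4*c+2 → b = 4*n+2 →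
      (Claim c n m 0 0 ∨ Claim c (n+1) m 0 0) ∧
      (Claim (c+1) n m 0 0 ∨ Claim (c+1) (n+1) m 0 0)
  g32 : ∀ c n, a = 4*c+3 → b = 4*n+2 →
      (Claim c n m 0 0 ∨ Claim c (n+1) m 0 0) ∧
      (Claim (c+1) n m 1 0 ∨ Claim (c+1) (n+1) m 1 0)
  g03 : ∀ c n, a = 4*c → b = 4*n+3 → Claim c (n+1) m 1 0
  g13 : ∀ c n, a = 4*c+1 → b = 4*n+3 → Claim c (n+1) m 0 0
  g23 : ∀ c n, a = 4*c+2 → b = 4*n+3 → Claim c (n+1) m 0 0 ∧ Claim (c+1) (n+1) m 0 0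
  g33 : ∀ c n, a = 4*c+3 → b = 4*n+3 → Claim c (n+1) m 0 1 ∧ Claim (c+1) (n+1) m 0 0

theorem master : ∀ m a b, Dec a b m → Goals a b m := by
  intro m
  induction m using Nat.strong_induction_on with
  | _ m IH =>
  intro a b hd
  cases hd with
  | nil =>
    refine ⟨?_,?_,?_,?_,?_,?_,?_,?_,?_,?_,?_,?_,?_,?_,?_,?_⟩ <;> intro c n h1 h2
    all_goals try (exfalso; omega)
    -- g00
    · exact ⟨0, by rw [show n = c by omega]; exact Dec.nil c, by omega⟩
    -- g11
    · exact ⟨0, by rw [show n = c by omega]; exact Dec.nil c, by omega⟩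
    -- g22
    · exact ⟨Or.inl ⟨0, by rw [show n = c by omega]; exact Dec.nil c, by omega⟩,
        Or.inr ⟨0, by rw [show n = c by omega]; exact Dec.nil _, by omega⟩⟩
    -- g33
    · refine ⟨⟨1, ?_, by omega⟩, ⟨0, by rw [show n = c by omega]; exact Dec.nil _, by omega⟩⟩
      rw [show n + 1 = c + 1 by omega]
      exact dec_single c
  | @cons _ c' _ m' hlt hpal htail =>
    have hG := IH m' (by omega) c' b htail
    have hcb : c' ≤ b := dec_le htail
    rcases palClass hpal hlt with hb1 | ⟨hb3, hra⟩ | ⟨hmod, hev⟩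
    -- Branch 1 : single letter piece, c' = a + 1
    · refine ⟨?_,?_,?_,?_,?_,?_,?_,?_,?_,?_,?_,?_,?_,?_,?_,?_⟩ <;> intro c n h1 h2
      · exact claim_cons (Dec.nil c) (hG.g10 c n (by omega) h2) (by omega)
      · exact claim_cons (Dec.nil c) ((hG.g20 c n (by omega) h2).1) (by omega)
      · have t := hG.g30 c n (by omega) h2
        exact ⟨claim_cons (Dec.nil c) t.1 (by omega),
               claim_cons (Dec.nil (c+1)) t.2 (by omega)⟩
      · have t := hG.g00 (c+1) n (by omega) h2
        exact ⟨claim_cons (dec_single c) t (by omega),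
               claim_cons (Dec.nil (c+1)) t (by omega)⟩
      · exact claim_cons (Dec.nil c) (hG.g11 c n (by omega) h2) (by omega)
      · exact claim_cons (Dec.nil c) ((hG.g21 c n (by omega) h2).1) (by omega)
      · have t := hG.g31 c n (by omega) h2
        exact ⟨claim_cons (Dec.nil c) t.1 (by omega),
               claim_cons (Dec.nil (c+1)) t.2 (by omega)⟩
      · have t := hG.g01 (c+1) n (by omega) h2
        exact ⟨claim_cons (dec_single c) t (by omega),
               claim_cons (Dec.nil (c+1)) t (by omega)⟩
      · exact claim_cons_or (Dec.nil c) (hG.g12 c n (by omega) h2) (by omega)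
      · exact claim_cons_or (Dec.nil c) ((hG.g22 c n (by omega) h2).1) (by omega)
      · have t := hG.g32 c n (by omega) h2
        exact ⟨claim_cons_or (Dec.nil c) t.1 (by omega),
               claim_cons_or (Dec.nil (c+1)) t.2 (by omega)⟩
      · have t := hG.g02 (c+1) n (by omega) h2
        exact ⟨claim_cons_or (dec_single c) t (by omega),
               claim_cons_or (Dec.nil (c+1)) t (by omega)⟩
      · exact claim_cons (Dec.nil c) (hG.g13 c n (by omega) h2) (by omega)
      · exact claim_cons (Dec.nil c) ((hG.g23 c n (by omega) h2).1) (by omega)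
      · have t := hG.g33 c n (by omega) h2
        exact ⟨claim_cons (Dec.nil c) t.1 (by omega),
               claim_cons (Dec.nil (c+1)) t.2 (by omega)⟩
      · have t := hG.g03 (c+1) n (by omega) h2
        exact ⟨claim_cons (dec_single c) t (by omega),
               claim_cons (Dec.nil (c+1)) t (by omega)⟩
    -- Branch 2 : length-3 piece, c' = a + 3, a % 4 ∈ {2,3}
    · refine ⟨?_,?_,?_,?_,?_,?_,?_,?_,?_,?_,?_,?_,?_,?_,?_,?_⟩ <;> intro c n h1 h2
      all_goals try (exfalso; omega)
      -- g20
      · have t := hG.g10 (c+1) n (by omega) h2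
        exact ⟨claim_cons (dec_single c) t (by omega),
               claim_cons (Dec.nil (c+1)) t (by omega)⟩
      -- g30
      · have t := hG.g20 (c+1) n (by omega) h2
        exact ⟨claim_cons (dec_single c) t.1 (by omega),
               claim_cons (Dec.nil (c+1)) t.1 (by omega)⟩
      -- g21
      · have t := hG.g11 (c+1) n (by omega) h2
        exact ⟨claim_cons (dec_single c) t (by omega),
               claim_cons (Dec.nil (c+1)) t (by omega)⟩
      -- g31
      · have t := hG.g21 (c+1) n (by omega) h2
        exact ⟨claim_cons (dec_single c) t.1 (by omega),
               claim_cons (Dec.nil (c+1)) t.1 (by omega)⟩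
      -- g22
      · have t := hG.g12 (c+1) n (by omega) h2
        exact ⟨claim_cons_or (dec_single c) t (by omega),
               claim_cons_or (Dec.nil (c+1)) t (by omega)⟩
      -- g32
      · have t := hG.g22 (c+1) n (by omega) h2
        exact ⟨claim_cons_or (dec_single c) t.1 (by omega),
               claim_cons_or (Dec.nil (c+1)) t.1 (by omega)⟩
      -- g23
      · have t := hG.g13 (c+1) n (by omega) h2
        exact ⟨claim_cons (dec_single c) t (by omega),
               claim_cons (Dec.nil (c+1)) t (by omega)⟩
      -- g33
      · have t := hG.g23 (c+1) n (by omega) h2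
        exact ⟨claim_cons (dec_single c) t.1 (by omega),
               claim_cons (Dec.nil (c+1)) t.1 (by omega)⟩
    -- Branch 3 : long even piece
    · refine ⟨?_,?_,?_,?_,?_,?_,?_,?_,?_,?_,?_,?_,?_,?_,?_,?_⟩ <;> intro c n h1 h2
      -- g00
      · obtain ⟨d, hd, hdc⟩ : ∃ d, c' = 4*d ∧ c < d := ⟨c'/4, by omega, by omega⟩
        have hp : Pal c d := palB0 (by rw [← h1, ← hd]; exact hpal)
        exact claim_cons (dec_one (by omega) hp) (hG.g00 d n hd h2) (by omega)
      -- g10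
      · obtain ⟨d, hd, hdc⟩ : ∃ d, c' = 4*d+3 ∧ c ≤ d := ⟨(c'-3)/4, by omega, by omega⟩
        have hp : Pal c (d+1) := palB1 (by rw [← h1, ← hd]; exact hpal)
        exact claim_cons (dec_one (by omega) hp) ((hG.g30 d n hd h2).2) (by omega)
      -- g20
      · obtain ⟨d, hd, hdc⟩ : ∃ d, c' = 4*d+2 ∧ c < d := ⟨(c'-2)/4, by omega, by omega⟩
        have hp : Pal c (d+1) := palB2 (by rw [← h1, ← hd]; exact hpal)
        have t := hG.g20 d n hd h2
        obtain ⟨j, hj, hj1⟩ := dec_dropBoth hp (by omega)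
        exact ⟨claim_cons (dec_one (by omega) hp) t.2 (by omega),
               claim_cons hj t.1 (by omega)⟩
      -- g30
      · obtain ⟨d, hd, hdc⟩ : ∃ d, c' = 4*d+1 ∧ c < d := ⟨(c'-1)/4, by omega, by omega⟩
        have hp : Pal c (d+1) := palB3 (by rw [← h1, ← hd]; exact hpal)
        have t := hG.g10 d n hd h2
        obtain ⟨j, hj, hj2⟩ := dec_dropLast hp (by omega)
        obtain ⟨j', hj', hj1'⟩ := dec_dropBoth hp (by omega)
        have hj'' : Dec c d j := by rw [show d = d+1-1 by omega] at hj ⊢; exact hj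
        have hjb : Dec (c+1) d j' := by rw [show d = d+1-1 by omega]; exact hj'
        exact ⟨claim_cons hj'' t (by omega), claim_cons hjb t (by omega)⟩
      -- g01
      · obtain ⟨d, hd, hdc⟩ : ∃ d, c' = 4*d ∧ c < d := ⟨c'/4, by omega, by omega⟩
        have hp : Pal c d := palB0 (by rw [← h1, ← hd]; exact hpal)
        exact claim_cons (dec_one (by omega) hp) (hG.g01 d n hd h2) (by omega)
      -- g11
      · obtain ⟨d, hd, hdc⟩ : ∃ d, c' = 4*d+3 ∧ c ≤ d := ⟨(c'-3)/4, by omega, by omega⟩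
        have hp : Pal c (d+1) := palB1 (by rw [← h1, ← hd]; exact hpal)
        exact claim_cons (dec_one (by omega) hp) ((hG.g31 d n hd h2).2) (by omega)
      -- g21
      · obtain ⟨d, hd, hdc⟩ : ∃ d, c' = 4*d+2 ∧ c < d := ⟨(c'-2)/4, by omega, by omega⟩
        have hp : Pal c (d+1) := palB2 (by rw [← h1, ← hd]; exact hpal)
        have t := hG.g21 d n hd h2
        obtain ⟨j, hj, hj1⟩ := dec_dropBoth hp (by omega)
        exact ⟨claim_cons (dec_one (by omega) hp) t.2 (by omega),
               claim_cons hj t.1 (by omega)⟩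
      -- g31
      · obtain ⟨d, hd, hdc⟩ : ∃ d, c' = 4*d+1 ∧ c < d := ⟨(c'-1)/4, by omega, by omega⟩
        have hp : Pal c (d+1) := palB3 (by rw [← h1, ← hd]; exact hpal)
        have t := hG.g11 d n hd h2
        obtain ⟨j, hj, hj2⟩ := dec_dropLast hp (by omega)
        obtain ⟨j', hj', hj1'⟩ := dec_dropBoth hp (by omega)
        have hj'' : Dec c d j := by rw [show d = d+1-1 by omega] at hj ⊢; exact hj
        have hjb : Dec (c+1) d j' := by rw [show d = d+1-1 by omega]; exact hj'
        exact ⟨claim_cons hj'' t (by omega), claim_cons hjb t (by omega)⟩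
      -- g02
      · obtain ⟨d, hd, hdc⟩ : ∃ d, c' = 4*d ∧ c < d := ⟨c'/4, by omega, by omega⟩
        have hp : Pal c d := palB0 (by rw [← h1, ← hd]; exact hpal)
        exact claim_cons_or (dec_one (by omega) hp) (hG.g02 d n hd h2) (by omega)
      -- g12
      · obtain ⟨d, hd, hdc⟩ : ∃ d, c' = 4*d+3 ∧ c ≤ d := ⟨(c'-3)/4, by omega, by omega⟩
        have hp : Pal c (d+1) := palB1 (by rw [← h1, ← hd]; exact hpal)
        exact claim_cons_or (dec_one (by omega) hp) ((hG.g32 d n hd h2).2) (by omega)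
      -- g22
      · obtain ⟨d, hd, hdc⟩ : ∃ d, c' = 4*d+2 ∧ c < d := ⟨(c'-2)/4, by omega, by omega⟩
        have hp : Pal c (d+1) := palB2 (by rw [← h1, ← hd]; exact hpal)
        have t := hG.g22 d n hd h2
        obtain ⟨j, hj, hj1⟩ := dec_dropBoth hp (by omega)
        exact ⟨claim_cons_or (dec_one (by omega) hp) t.2 (by omega),
               claim_cons_or hj t.1 (by omega)⟩
      -- g32
      · obtain ⟨d, hd, hdc⟩ : ∃ d, c' = 4*d+1 ∧ c < d := ⟨(c'-1)/4, by omega, by omega⟩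
        have hp : Pal c (d+1) := palB3 (by rw [← h1, ← hd]; exact hpal)
        have t := hG.g12 d n hd h2
        obtain ⟨j, hj, hj2⟩ := dec_dropLast hp (by omega)
        obtain ⟨j', hj', hj1'⟩ := dec_dropBoth hp (by omega)
        have hj'' : Dec c d j := by rw [show d = d+1-1 by omega] at hj ⊢; exact hj
        have hjb : Dec (c+1) d j' := by rw [show d = d+1-1 by omega]; exact hj'
        exact ⟨claim_cons_or hj'' t (by omega), claim_cons_or hjb t (by omega)⟩
      -- g03
      · obtain ⟨d, hd, hdc⟩ : ∃ d, c' = 4*d ∧ c < d := ⟨c'/4, by omega, by omega⟩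
        have hp : Pal c d := palB0 (by rw [← h1, ← hd]; exact hpal)
        exact claim_cons (dec_one (by omega) hp) (hG.g03 d n hd h2) (by omega)
      -- g13
      · obtain ⟨d, hd, hdc⟩ : ∃ d, c' = 4*d+3 ∧ c ≤ d := ⟨(c'-3)/4, by omega, by omega⟩
        have hp : Pal c (d+1) := palB1 (by rw [← h1, ← hd]; exact hpal)
        exact claim_cons (dec_one (by omega) hp) ((hG.g33 d n hd h2).2) (by omega)
      -- g23
      · obtain ⟨d, hd, hdc⟩ : ∃ d, c' = 4*d+2 ∧ c < d := ⟨(c'-2)/4, by omega, by omega⟩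
        have hp : Pal c (d+1) := palB2 (by rw [← h1, ← hd]; exact hpal)
        have t := hG.g23 d n hd h2
        obtain ⟨j, hj, hj1⟩ := dec_dropBoth hp (by omega)
        exact ⟨claim_cons (dec_one (by omega) hp) t.2 (by omega),
               claim_cons hj t.1 (by omega)⟩
      -- g33
      · obtain ⟨d, hd, hdc⟩ : ∃ d, c' = 4*d+1 ∧ c < d := ⟨(c'-1)/4, by omega, by omega⟩
        have hp : Pal c (d+1) := palB3 (by rw [← h1, ← hd]; exact hpal)
        have t := hG.g13 d n hd h2
        obtain ⟨j, hj, hj2⟩ := dec_dropLast hp (by omega)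
        obtain ⟨j', hj', hj1'⟩ := dec_dropBoth hp (by omega)
        have hj'' : Dec c d j := by rw [show d = d+1-1 by omega] at hj ⊢; exact hj
        have hjb : Dec (c+1) d j' := by rw [show d = d+1-1 by omega]; exact hj'
        exact ⟨claim_cons hj'' t (by omega), claim_cons hjb t (by omega)⟩

/-! ### Upper bounds -/

lemma dec_self {a m : ℕ} (h : Dec a a m) : m = 0 := by
  cases h with
  | nil => rfl
  | cons hlt hp ht => exact absurd (dec_le ht) (by omega)

lemma dec_img {x y k : ℕ} (h : Dec x y k) : Dec (4*x) (4*y) k := by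
  induction h with
  | nil => exact Dec.nil _
  | cons hlt hp ht ih => exact Dec.cons (by omega) (pal4 hp) ih

lemma ub3 {x y k : ℕ} (h : Dec x y k) : x < y → Dec (4*x) (4*y-1) (k+1) := by
  induction h with
  | nil => intro h; exact absurd h (lt_irrefl _)
  | @cons a c b m hlt hp ht ih =>
    intro hxy
    rcases eq_or_lt_of_le (dec_le ht) with rfl | hcy
    · have hm : m = 0 := dec_self ht
      subst hm
      have hin : Pal (4*a+1) (4*c-1) := by
        have := pal_inner (pal4 hp)
        simpa using this
      have h2 : Dec (4*a+1) (4*c-1) 1 := dec_one (by omega) hin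
      have := dec_cat (dec_single (4*a)) (by rw [show 4*a+1 = 4*a+1 from rfl]; exact h2)
      simpa using this
    · have := dec_cat (dec_one (by omega) (pal4 hp) : Dec (4*a) (4*c) 1) (ih hcy)
      convert this using 1
      omega

lemma ub2b {x y k : ℕ} (h : Dec x y k) : x < y → ∃ j, Dec (4*x) (4*y-2) j ∧ j ≤ k + 2 := by
  induction h with
  | nil => intro h; exact absurd h (lt_irrefl _)
  | @cons a c b m hlt hp ht ih =>
    intro hxy
    rcases eq_or_lt_of_le (dec_le ht) with rfl | hcy
    · have hm : m = 0 := dec_self ht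
      subst hm
      rcases (by omega : c = a + 1 ∨ a + 2 ≤ c) with hc | hc
      · refine ⟨2, ?_, by omega⟩
        have := dec_cat (dec_single (4*a)) (dec_single (4*a+1))
        have e : 4*c-2 = 4*a+1+1 := by omega
        rw [e]
        exact this
      · refine ⟨3, ?_, by omega⟩
        have hin : Pal (4*a+2) (4*c-2) := by
          have h1 := pal_inner (pal4 hp)
          have h2 := pal_inner h1
          have e1 : 4*a+1+1 = 4*a+2 := by omega
          have e2 : 4*c-1-1 = 4*c-2 := by omega
          rwa [e1, e2] at h2
        have h2 : Dec (4*a+2) (4*c-2) 1 := dec_one (by omega) hin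
        exact dec_cat (dec_single (4*a)) (dec_cat (dec_single (4*a+1)) h2)
    · obtain ⟨j, hj, hjb⟩ := ih hcy
      exact ⟨1 + j, dec_cat (dec_one (by omega) (pal4 hp)) hj, by omega⟩

lemma dec_full : ∀ n a : ℕ, Dec a (a+n) n := by
  intro n
  induction n with
  | zero => intro a; exact Dec.nil a
  | succ n ih =>
    intro a
    have := Dec.cons (by omega : a < a+1) (pal_single a) (ih (a+1))
    rw [show a+(n+1) = a+1+n by omega]
    exact this

/-! ### Bridge with the list-based definitions -/

def seg (a b : ℕ) : List ℕ := (List.range' a (b-a)).map tm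

lemma seg_length (a b : ℕ) : (seg a b).length = b - a := by simp [seg]

lemma seg_getElem {a b : ℕ} (i : ℕ) (h : i < (seg a b).length) :
    (seg a b)[i] = tm (a + i) := by
  unfold seg at h ⊢
  rw [List.getElem_map, List.getElem_range', one_mul]

lemma seg_append {a c b : ℕ} (h1 : a ≤ c) (h2 : c ≤ b) :
    seg a c ++ seg c b = seg a b := by
  unfold seg
  rw [← List.map_append]
  congr 1
  have : List.range' a (c-a) ++ List.range' (a + 1*(c-a)) (b-c) 1 = List.range' a ((c-a)+(b-c)) 1 :=
    List.range'_append
  rw [show a + 1*(c-a) = c by omega, show c-a+(b-c) = b-a by omega] at this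
  exact this

lemma pal_iff_seg {a b : ℕ} : (seg a b).Palindrome ↔ Pal a b := by
  rw [List.Palindrome.iff_reverse_eq]
  constructor
  · intro hrev i j hi hj hib hjb hsum
    have hlen : (seg a b).length = b - a := seg_length a b
    have h1 : i - a < (seg a b).length := by omega
    have h2 : j - a < (seg a b).length := by omega
    have h2' : j - a < (seg a b).reverse.length := by
      rw [List.length_reverse]; omega
    have := List.getElem_reverse h2'
    simp only [hrev] at this
    rw [seg_getElem (j-a) h2] at this
    rw [seg_getElem ((seg a b).length - 1 - (j-a)) (by omega)] at this
    rw [show a + (j - a) = j by omega] at this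
    rw [show a + ((seg a b).length - 1 - (j - a)) = i by omega] at this
    exact this.symm
  · intro hp
    apply List.ext_getElem (by rw [List.length_reverse])
    intro i h1 h2
    rw [List.getElem_reverse h1, seg_getElem i h2,
        seg_getElem ((seg a b).length - 1 - i) (by omega)]
    have hlen : (seg a b).length = b - a := seg_length a b
    exact hp _ _ (by omega) (by omega) (by omega) (by omega) (by omega)

lemma seg_ne_nil {a b : ℕ} (h : a < b) : seg a b ≠ [] := by
  intro hc
  have := seg_length a b
  rw [hc] at this
  simp at this
  omega

lemma dec_to_list {a b m : ℕ} (h : Dec a b m) :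
    ∃ ps : List (List ℕ), ps.length = m ∧ ps.flatten = seg a b ∧
      ∀ p ∈ ps, p ≠ [] ∧ p.Palindrome := by
  induction h with
  | nil =>
    refine ⟨[], rfl, ?_, by simp⟩
    simp [seg]
  | @cons a c b m hlt hp ht ih =>
    obtain ⟨ps, hl, hf, hpal⟩ := ih
    refine ⟨seg a c :: ps, by simp [hl], ?_, ?_⟩
    · simp only [List.flatten_cons, hf]
      exact seg_append (by omega) (dec_le ht)
    · intro p hps
      rcases List.mem_cons.mp hps with rfl | hmem
      · exact ⟨seg_ne_nil hlt, pal_iff_seg.mpr hp⟩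
      · exact hpal p hmem

lemma list_to_dec : ∀ (ps : List (List ℕ)) (a b : ℕ), a ≤ b → ps.flatten = seg a b →
    (∀ p ∈ ps, p ≠ [] ∧ p.Palindrome) → Dec a b ps.length := by
  intro ps
  induction ps with
  | nil =>
    intro a b hab hf _
    simp only [List.flatten_nil] at hf
    have : (seg a b).length = 0 := by rw [← hf]; rfl
    rw [seg_length] at this
    have : a = b := by omega
    subst this
    exact Dec.nil a
  | cons p ps ih =>
    intro a b hab hf hpal
    have hp := hpal p List.mem_cons_self
    have hplen : 0 < p.length := List.length_pos_iff.mpr hp.1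
    set c := a + p.length with hc
    have hcb : c ≤ b := by
      have := congrArg List.length hf
      simp only [List.length_flatten] at this
      rw [seg_length] at this
      simp only [List.map_cons, List.sum_cons] at this
      omega
    have hsplit : p ++ ps.flatten = seg a c ++ seg c b := by
      rw [seg_append (by omega) hcb]
      simpa using hf
    have hinj := List.append_inj hsplit (by rw [seg_length]; omega)
    have hdec : Dec c b ps.length := by
      apply ih c b hcb hinj.2
      intro q hq
      exact hpal q (List.mem_cons_of_mem p hq)
    have hpac : Pal a c := by
      rw [← pal_iff_seg, ← hinj.1]
      exact hp.2
    have := Dec.cons (by omega : a < c) hpac hdec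
    simpa using this

lemma pplTM_eq_sInf (N : ℕ) : pplTM N = sInf {k | Dec 0 N k} := by
  unfold pplTM palLen
  congr 1
  ext k
  constructor
  · rintro ⟨ps, hlen, hflat, hpal⟩
    have hseg : ps.flatten = seg 0 N := by
      rw [hflat]
      unfold seg
      rw [List.range_eq_range']
      congr 1
    have := list_to_dec ps 0 N (by omega) hseg hpal
    rwa [hlen] at this
  · intro hdec
    obtain ⟨ps, hlen, hflat, hpal⟩ := dec_to_list hdec
    refine ⟨ps, hlen, ?_, hpal⟩
    rw [hflat]
    unfold seg
    rw [List.range_eq_range']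
    congr 1

lemma dec_ppl (N : ℕ) : Dec 0 N (pplTM N) := by
  rw [pplTM_eq_sInf]
  have hne : {k | Dec 0 N k}.Nonempty := ⟨N, by simpa using dec_full N 0⟩
  exact Nat.sInf_mem hne

lemma ppl_le {N k : ℕ} (h : Dec 0 N k) : pplTM N ≤ k := by
  rw [pplTM_eq_sInf]
  exact Nat.sInf_le h

end TMW

open TMW

/-- Theorem 1 (recurrence relations for the prefix palindromic length of the
Thue–Morse word): for every `n ≥ 0`, `PPL_t(4n) = PPL_t(n)`,
`PPL_t(4n+1) = PPL_t(n) + 1`, `PPL_t(4n+2) = min(PPL_t(n), PPL_t(n+1)) + 2`,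
and `PPL_t(4n+3) = PPL_t(n+1) + 1`. -/
theorem pplTM_recurrences (n : ℕ) :
    pplTM (4 * n) = pplTM n ∧
    pplTM (4 * n + 1) = pplTM n + 1 ∧
    pplTM (4 * n + 2) = min (pplTM n) (pplTM (n + 1)) + 2 ∧
    pplTM (4 * n + 3) = pplTM (n + 1) + 1 := by
  refine ⟨?_, ?_, ?_, ?_⟩
  · -- 4n
    apply le_antisymm
    · have := dec_img (dec_ppl n)
      exact ppl_le (by simpa using this)
    · have hg := (master _ _ _ (dec_ppl (4*n))).g00 0 n (by omega) rfl
      obtain ⟨k, hk, hb⟩ := hg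
      calc pplTM n ≤ k := ppl_le hk
        _ ≤ pplTM (4*n) := by omega
  · -- 4n+1
    apply le_antisymm
    · have h1 := dec_img (dec_ppl n)
      have h2 : Dec 0 (4*n+1) (pplTM n + 1) := by
        have := dec_cat (by simpa using h1 : Dec 0 (4*n) (pplTM n)) (dec_single (4*n))
        exact this
      exact ppl_le h2
    · have hg := (master _ _ _ (dec_ppl (4*n+1))).g01 0 n (by omega) rfl
      obtain ⟨k, hk, hb⟩ := hg
      have := ppl_le hk
      omega
  · -- 4n+2
    apply le_antisymm
    · rcases le_total (pplTM n) (pplTM (n+1)) with hmin | hmin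
      · rw [min_eq_left hmin]
        have h1 := dec_img (dec_ppl n)
        have h2 : Dec 0 (4*n+2) (pplTM n + 2) := by
          have := dec_cat (by simpa using h1 : Dec 0 (4*n) (pplTM n))
            (dec_cat (dec_single (4*n)) (dec_single (4*n+1)))
          exact this
        exact ppl_le h2
      · rw [min_eq_right hmin]
        obtain ⟨j, hj, hjb⟩ := ub2b (dec_ppl (n+1)) (by omega)
        have hj' : Dec 0 (4*n+2) j := by
          rw [show (4:ℕ)*(n+1)-2 = 4*n+2 by omega, show (4:ℕ)*0 = 0 by omega] at hj
          exact hj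
        have := ppl_le hj'
        omega
    · have hg := (master _ _ _ (dec_ppl (4*n+2))).g02 0 n (by omega) rfl
      rcases hg with ⟨k, hk, hb⟩ | ⟨k, hk, hb⟩
      · have := ppl_le hk
        have hmin : min (pplTM n) (pplTM (n+1)) ≤ pplTM n := min_le_left _ _
        omega
      · have := ppl_le hk
        have hmin : min (pplTM n) (pplTM (n+1)) ≤ pplTM (n+1) := min_le_right _ _
        omega
  · -- 4n+3
    apply le_antisymm
    · have h1 := ub3 (dec_ppl (n+1)) (by omega)
      have h2 : Dec 0 (4*n+3) (pplTM (n+1) + 1) := by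
        rw [show (4:ℕ)*(n+1)-1 = 4*n+3 by omega, show (4:ℕ)*0 = 0 by omega] at h1
        exact h1
      exact ppl_le h2
    · have hg := (master _ _ _ (dec_ppl (4*n+3))).g03 0 n (by omega) rfl
      obtain ⟨k, hk, hb⟩ := hg
      have := ppl_le hk
      omega
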